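/- In the two-qubit Hilbert space ℂ²⊗ℂ², with A₀ = σ_z⊗1, A₁ = σ_x⊗1, B₀ = 1⊗(cosμ σ_z + sinμ σ_x), B₁ = 1⊗(cosμ σ_z − sinμ σ_x), and state |ψ⟩ = cosθ|00⟩ + sinθ|11⟩ with tanμ = sin(2θ)/α and β = 2cos(2θ)/√(α² + sin²(2θ)), the expectation ⟨ψ| βA₀ + α(A₀B₀ + A₀B₁) + A₁B₀ − A₁B₁ |ψ⟩ equals √((4+β²)(1+α²)). -/

import Mathlib

open Matrix Real
open Kronecker

noncomputable def σz : Matrix (Fin 2) (Fin 2) ℂ := !![1, 0; 0, -1]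
noncomputable def σx : Matrix (Fin 2) (Fin 2) ℂ := !![0, 1; 1, 0]

set_option maxHeartbeats 1000000 in
theorem stmt_7 (α β θ μ : ℝ) (hα : 1 ≤ α) (hθ : θ ∈ Set.Ioc 0 (π / 4))
    (hμ : μ ∈ Set.Ioc 0 (π / 4))
    (hμθ : Real.tan μ = Real.sin (2 * θ) / α)
    (hβ : β = 2 * Real.cos (2 * θ) / Real.sqrt (α ^ 2 + Real.sin (2 * θ) ^ 2))
    (A₀ A₁ B₀ B₁ : Matrix (Fin 2 × Fin 2) (Fin 2 × Fin 2) ℂ)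
    (hA₀ : A₀ = σz ⊗ₖ (1 : Matrix (Fin 2) (Fin 2) ℂ))
    (hA₁ : A₁ = σx ⊗ₖ (1 : Matrix (Fin 2) (Fin 2) ℂ))
    (hB₀ : B₀ = (1 : Matrix (Fin 2) (Fin 2) ℂ) ⊗ₖ
      ((Real.cos μ : ℂ) • σz + (Real.sin μ : ℂ) • σx))
    (hB₁ : B₁ = (1 : Matrix (Fin 2) (Fin 2) ℂ) ⊗ₖ
      ((Real.cos μ : ℂ) • σz - (Real.sin μ : ℂ) • σx))
    (ψ : Fin 2 × Fin 2 → ℂ)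
    (hψ : ψ = fun p => if p = (0, 0) then (Real.cos θ : ℂ)
      else if p = (1, 1) then (Real.sin θ : ℂ) else 0) :
    star ψ ⬝ᵥ (((β : ℂ) • A₀ + (α : ℂ) • (A₀ * B₀ + A₀ * B₁) + A₁ * B₀ - A₁ * B₁).mulVec ψ) =
      (Real.sqrt ((4 + β ^ 2) * (1 + α ^ 2)) : ℂ) := by
  obtain ⟨hθ0, hθ1⟩ := hθ
  obtain ⟨hμ0, hμ1⟩ := hμ
  have hπ : (0:ℝ) < π / 4 := by positivity
  have hαpos : (0:ℝ) < α := lt_of_lt_of_le one_pos hα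
  set s : ℝ := Real.sqrt (α ^ 2 + Real.sin (2 * θ) ^ 2) with hs_def
  have hspos : 0 < s := Real.sqrt_pos.mpr (by nlinarith [sq_nonneg (Real.sin (2*θ))])
  have hs2 : s ^ 2 = α ^ 2 + Real.sin (2 * θ) ^ 2 :=
    Real.sq_sqrt (by nlinarith [sq_nonneg (Real.sin (2*θ))])
  have hcosμpos : 0 < Real.cos μ := Real.cos_pos_of_mem_Ioo
    ⟨by linarith [Real.pi_pos], by linarith [Real.pi_pos]⟩
  have hcos2 : Real.cos μ ^ 2 = (1 + Real.tan μ ^ 2)⁻¹ :=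
    (Real.inv_one_add_tan_sq (ne_of_gt hcosμpos)).symm
  have hcosμ : Real.cos μ = α / s := by
    have h1 : Real.cos μ ^ 2 = (α / s) ^ 2 := by
      rw [hcos2, hμθ, div_pow, div_pow]
      field_simp
      nlinarith [hs2]
    have h2 : 0 < α / s := by positivity
    nlinarith [h1, h2, hcosμpos]
  have hsinμ : Real.sin μ = Real.sin (2 * θ) / s := by
    have := Real.tan_eq_sin_div_cos μ
    rw [hμθ] at this
    field_simp at this ⊢
    rw [hcosμ] at this
    field_simp at this
    nlinarith [this]
  have hcos2θ : Real.cos (2 * θ) = Real.cos θ ^ 2 - Real.sin θ ^ 2 := Real.cos_two_mul' θ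
  have hsin2θ : Real.sin (2 * θ) = 2 * Real.sin θ * Real.cos θ := Real.sin_two_mul θ
  have hpyth : Real.sin θ ^ 2 + Real.cos θ ^ 2 = 1 := Real.sin_sq_add_cos_sq θ
  have key : β * Real.cos θ ^ 2 + 2 * α * Real.cos μ * Real.cos θ ^ 2
      + 2 * Real.sin μ * Real.sin θ * Real.cos θ
      - β * Real.sin θ ^ 2 + 2 * α * Real.cos μ * Real.sin θ ^ 2
      + 2 * Real.cos θ * Real.sin μ * Real.sin θ
      = Real.sqrt (4 + β ^ 2 + β ^ 2 * α ^ 2 + α ^ 2 * 4) := by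
    have hpyth2 : Real.sin (2 * θ) ^ 2 + Real.cos (2 * θ) ^ 2 = 1 :=
      Real.sin_sq_add_cos_sq (2 * θ)
    have hsne : s ≠ 0 := ne_of_gt hspos
    have hrhs : 4 + β ^ 2 + β ^ 2 * α ^ 2 + α ^ 2 * 4 = (2 * (1 + α ^ 2) / s) ^ 2 := by
      rw [hβ]
      field_simp
      linear_combination (4 + 4 * α ^ 2) * hs2 + (4 + 4 * α ^ 2) * hpyth2
    rw [hrhs, Real.sqrt_sq (by positivity)]
    rw [hcosμ, hsinμ, hβ, hsin2θ, hcos2θ]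
    field_simp
    linear_combination (Real.sin θ ^ 2 + Real.cos θ ^ 2 + α ^ 2 + 1) * hpyth
  subst hA₀ hA₁ hB₀ hB₁ hψ
  simp only [dotProduct, Matrix.mulVec, Fintype.sum_prod_type, Fin.sum_univ_two,
    Matrix.kroneckerMap_apply, Matrix.mul_apply, Matrix.add_apply, Matrix.sub_apply,
    Matrix.smul_apply, Matrix.one_apply, σz, σx, Matrix.cons_val', Matrix.cons_val_zero,
    Matrix.cons_val_one, Matrix.head_cons, Matrix.head_fin_const, Matrix.empty_val',
    Matrix.cons_val_fin_one, Pi.star_apply]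
  norm_num
  ring_nf
  simp only [← Complex.ofReal_cos, ← Complex.ofReal_sin, Complex.conj_ofReal]
  push_cast
  exact_mod_cast congrArg (Complex.ofReal) (by linarith [key])
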